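/- Let S(λ) = λA+B be an n×n complex symmetric pencil with rank r₀ < n. Then S(λ) is the limit (in the Euclidean topology on pairs of matrices) of a sequence of n×n complex symmetric pencils each of rank exactly r₀+1. -/

import Mathlib

open Matrix Filter

/-- The matrix over `ℂ(λ)` associated to the pencil `λA + B`. -/
noncomputable def pencilRat {n : ℕ} (A B : Matrix (Fin n) (Fin n) ℂ) :
    Matrix (Fin n) (Fin n) (RatFunc ℂ) :=
  Matrix.of fun i j => RatFunc.X * RatFunc.C (A i j) + RatFunc.C (B i j)

variable {F : Type*} [Field F] {n : ℕ}

/-- dot-product representation of a functional -/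
lemma dual_eq_dot (f : Module.Dual F (Fin n → F)) (y : Fin n → F) :
    f y = (fun i => f (Pi.single i 1)) ⬝ᵥ y := by
  rw [LinearMap.pi_apply_eq_sum_univ f y, dotProduct]
  refine Finset.sum_congr rfl fun i _ => ?_
  have : (fun j => if i = j then (1:F) else 0) = Pi.single i 1 := by
    ext j; simp [Pi.single_apply, eq_comm]
  rw [this, smul_eq_mul, mul_comm]

lemma perp_of_nmem_range (M : Matrix (Fin n) (Fin n) F) (hM : M.IsSymm)
    {v : Fin n → F} (hv : v ∉ LinearMap.range M.mulVecLin) :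
    ∃ x, M.mulVec x = 0 ∧ v ⬝ᵥ x ≠ 0 := by
  obtain ⟨f, hfv, hmap⟩ := Submodule.exists_dual_map_eq_bot_of_notMem hv inferInstance
  set u : Fin n → F := fun i => f (Pi.single i 1) with hu
  have hfy : ∀ y, f y = u ⬝ᵥ y := fun y => dual_eq_dot f y
  have hker : ∀ w, u ⬝ᵥ M.mulVec w = 0 := by
    intro w
    rw [← hfy]
    have : M.mulVec w ∈ LinearMap.range M.mulVecLin := ⟨w, rfl⟩
    have := Submodule.mem_map_of_mem (f := f) this
    rw [hmap] at this
    simpa using this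
  refine ⟨u, ?_, ?_⟩
  · have huM : u ᵥ* M = M *ᵥ u := by
      conv_lhs => rw [← hM.eq]
      exact vecMul_transpose M u
    funext i
    have := hker (Pi.single i 1)
    rwa [dotProduct_mulVec, huM, dotProduct_single, mul_one] at this
  · rw [dotProduct_comm, ← hfy]; exact hfv

lemma vecMulVec_mulVec' (v x : Fin n → F) :
    (vecMulVec v v).mulVec x = (v ⬝ᵥ x) • v := by
  funext i
  simp only [mulVec, vecMulVec_apply, dotProduct, Pi.smul_apply, smul_eq_mul, Finset.sum_mul]
  exact Finset.sum_congr rfl fun k _ => by ring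

lemma rank_add_smul_vecMulVec (M : Matrix (Fin n) (Fin n) F) (hM : M.IsSymm)
    {v : Fin n → F} (hv : v ∉ LinearMap.range M.mulVecLin) {c : F} (hc : c ≠ 0) :
    (M + c • vecMulVec v v).rank = M.rank + 1 := by
  have hv0 : v ≠ 0 := fun h => hv (h ▸ Submodule.zero_mem _)
  set N := M + c • vecMulVec v v with hN
  have hNx : ∀ x, N.mulVec x = M.mulVec x + (c * (v ⬝ᵥ x)) • v := by
    intro x
    rw [hN, add_mulVec, smul_mulVec, vecMulVec_mulVec', smul_smul]
  -- upper bound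
  have hup : N.rank ≤ M.rank + 1 := by
    have hle : LinearMap.range N.mulVecLin ≤
        LinearMap.range M.mulVecLin ⊔ Submodule.span F {v} := by
      rintro _ ⟨x, rfl⟩
      rw [mulVecLin_apply, hNx]
      exact Submodule.add_mem_sup ⟨x, rfl⟩
        (Submodule.smul_mem _ _ (Submodule.mem_span_singleton_self v))
    calc N.rank ≤ Module.finrank F
          (LinearMap.range M.mulVecLin ⊔ Submodule.span F {v} : Submodule F (Fin n → F)) :=
          Submodule.finrank_mono hle
      _ ≤ M.rank + Module.finrank F (Submodule.span F {v}) :=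
          Submodule.finrank_add_le_finrank_add_finrank _ _
      _ ≤ M.rank + 1 := by
          gcongr; exact (finrank_span_singleton hv0).le
  -- kernel comparison
  have hkerlt : LinearMap.ker N.mulVecLin < LinearMap.ker M.mulVecLin := by
    obtain ⟨x₀, hx₀, hvx₀⟩ := perp_of_nmem_range M hM hv
    have hker_le : LinearMap.ker N.mulVecLin ≤ LinearMap.ker M.mulVecLin := by
      intro x hx
      rw [LinearMap.mem_ker, mulVecLin_apply, hNx] at hx
      have hvx : v ⬝ᵥ x = 0 := by
        by_contra h
        apply hv
        refine ⟨(-(c * (v ⬝ᵥ x)))⁻¹ • x, ?_⟩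
        have hM' : M.mulVec x = -((c * (v ⬝ᵥ x)) • v) := by
          rw [eq_neg_iff_add_eq_zero]; exact hx
        have hne : -(c * (v ⬝ᵥ x)) ≠ 0 := by
          simp [hc, h]
        rw [mulVecLin_apply, mulVec_smul, hM', ← neg_smul, smul_smul,
          inv_mul_cancel₀ hne, one_smul]
      rw [LinearMap.mem_ker, mulVecLin_apply]
      have := hx
      rw [hvx, mul_zero, zero_smul, add_zero] at this
      exact this
    refine hker_le.lt_of_ne fun heq => ?_
    have hx₀N : x₀ ∈ LinearMap.ker N.mulVecLin := by
      rw [heq]; simpa [LinearMap.mem_ker]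
    rw [LinearMap.mem_ker, mulVecLin_apply, hNx, hx₀, zero_add] at hx₀N
    exact hv0 (by
      have : c * (v ⬝ᵥ x₀) ≠ 0 := mul_ne_zero hc hvx₀
      exact (smul_eq_zero.mp hx₀N).resolve_left this)
  have hklt : Module.finrank F (LinearMap.ker N.mulVecLin) <
      Module.finrank F (LinearMap.ker M.mulVecLin) :=
    Submodule.finrank_lt_finrank_of_lt hkerlt
  have hrnN := LinearMap.finrank_range_add_finrank_ker N.mulVecLin
  have hrnM := LinearMap.finrank_range_add_finrank_ker M.mulVecLin
  have hdim : Module.finrank F (Fin n → F) = n := by simp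
  rw [hdim] at hrnN hrnM
  have : N.rank = Module.finrank F (LinearMap.range N.mulVecLin) := rfl
  have : M.rank = Module.finrank F (LinearMap.range M.mulVecLin) := rfl
  unfold Matrix.rank at hup ⊢
  omega

lemma exists_single_nmem_range (M : Matrix (Fin n) (Fin n) F) (hr : M.rank < n) :
    ∃ j, Pi.single j (1:F) ∉ LinearMap.range M.mulVecLin := by
  by_contra h
  push_neg at h
  have htop : LinearMap.range M.mulVecLin = ⊤ := by
    rw [eq_top_iff]
    intro x _
    rw [pi_eq_sum_univ x]
    refine Submodule.sum_mem _ fun i _ => Submodule.smul_mem _ _ ?_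
    have : (fun j => if i = j then (1:F) else 0) = Pi.single i 1 := by
      ext j; simp [Pi.single_apply, eq_comm]
    rw [this]; exact h i
  rw [Matrix.rank, htop] at hr
  simp at hr

noncomputable def pertB {n : ℕ} (B : Matrix (Fin n) (Fin n) ℂ) (j : Fin n) (c : ℂ) :
    Matrix (Fin n) (Fin n) ℂ := B + c • Matrix.single j j 1

set_option synthInstance.maxHeartbeats 1000000 in
set_option maxHeartbeats 1000000 in
lemma pencilRat_pertB {n : ℕ} (A B : Matrix (Fin n) (Fin n) ℂ) (j : Fin n) (c : ℂ) :
    pencilRat A (pertB B j c) = pencilRat A B +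
      RatFunc.C c • vecMulVec (Pi.single j (1 : RatFunc ℂ)) (Pi.single j 1) := by
  ext i k
  simp only [pencilRat, pertB, Matrix.add_apply, Matrix.smul_apply, Matrix.of_apply,
    vecMulVec_apply, Pi.single_apply, Matrix.single, smul_eq_mul, Matrix.of_apply]
  by_cases hi : j = i <;> by_cases hk : j = k <;>
    simp [hi, hk, eq_comm, apply_ite RatFunc.C, add_assoc]

lemma pencilRat_isSymm {n : ℕ} {A B : Matrix (Fin n) (Fin n) ℂ}
    (hA : A.IsSymm) (hB : B.IsSymm) : (pencilRat A B).IsSymm := by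
  ext i k
  simp only [transpose_apply, pencilRat, Matrix.of_apply, hA.apply k i, hB.apply k i]

lemma stdBasisMatrix_isSymm {n : ℕ} (j : Fin n) :
    (Matrix.single j j (1:ℂ)).IsSymm := by
  ext i k
  simp [Matrix.single, and_comm]

lemma RatFuncC_ne_zero {c : ℂ} (hc : c ≠ 0) : RatFunc.C c ≠ 0 := by
  simpa using RatFunc.algebraMap_ne_zero (Polynomial.C_ne_zero.mpr hc)

lemma tendsto_invCNat : Tendsto (fun m : ℕ => ((m:ℂ)+1)⁻¹) atTop (nhds 0) := by
  have h := tendsto_one_div_add_atTop_nhds_zero_nat (𝕜 := ℝ)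
  have := (Complex.continuous_ofReal.tendsto 0).comp h
  simpa [Function.comp_def, one_div] using this

/-- Every `n × n` complex symmetric pencil `λA + B` of rank `r₀ < n` is the limit of a
sequence of `n × n` complex symmetric pencils, each of rank exactly `r₀ + 1`. -/
theorem stmt2 (n r₀ : ℕ) (A B : Matrix (Fin n) (Fin n) ℂ)
    (hA : A.IsSymm) (hB : B.IsSymm)
    (hrank : (pencilRat A B).rank = r₀) (hr : r₀ < n) :
    ∃ f : ℕ → Matrix (Fin n) (Fin n) ℂ × Matrix (Fin n) (Fin n) ℂ,
      (∀ m, (f m).1.IsSymm ∧ (f m).2.IsSymm ∧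
        (pencilRat (f m).1 (f m).2).rank = r₀ + 1) ∧
      Tendsto f atTop (nhds (A, B)) := by
  set M := pencilRat A B with hM
  obtain ⟨j, hj⟩ := exists_single_nmem_range M (by rw [hrank]; exact hr)
  set c : ℕ → ℂ := fun m => ((m:ℂ)+1)⁻¹ with hc
  have hcne : ∀ m, c m ≠ 0 := by
    intro m
    simp only [hc, ne_eq, inv_eq_zero]
    exact Nat.cast_add_one_ne_zero m
  refine ⟨fun m => (A, pertB B j (c m)), fun m => ⟨hA, ?_, ?_⟩, ?_⟩
  · exact hB.add ((stdBasisMatrix_isSymm j).smul (c m))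
  · rw [pencilRat_pertB, ← hM,
      rank_add_smul_vecMulVec M (pencilRat_isSymm hA hB) hj
        (RatFuncC_ne_zero (hcne m)), hrank]
  · rw [nhds_prod_eq]
    refine Tendsto.prodMk tendsto_const_nhds ?_
    have h0 : Tendsto (fun m : ℕ => c m • Matrix.single j j (1:ℂ))
        atTop (nhds ((0:ℂ) • Matrix.single j j (1:ℂ))) :=
      tendsto_invCNat.smul_const _
    rw [zero_smul] at h0
    have hBc : Tendsto (fun _ : ℕ => B) atTop (nhds B) := tendsto_const_nhds
    have := hBc.add h0
    simpa [pertB] using this
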